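/- For every k > 1, the complete graph K_{6k+4} admits a 4-null 1-factorisation: a 1-factorisation together with an edge assignment from {±1, ±2, ±3} such that edge values at each vertex sum to zero and each 1-factor has total weight zero. -/

import Mathlib

namespace Stmt14

instance nz (k : ℕ) : NeZero (6*k+3) := ⟨by omega⟩

def bz : ZMod 3 → ℤ := fun r => if r = 2 then -2 else 1

def fz (r : ZMod 3) (i : ℕ) : ℤ :=
  if i = 3 then (if r = 2 then 1 else -1)
  else if i % 3 = 0 then 1
  else if i % 3 = 1 then (if r = 2 then 2 else 1)
  else (if r = 2 then -3 else -2)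

lemma bz_props (r : ZMod 3) : bz r ≠ 0 ∧ |bz r| ≤ 3 := by
  unfold bz; split <;> norm_num

lemma fz_props (r : ZMod 3) (i : ℕ) : fz r i ≠ 0 ∧ |fz r i| ≤ 3 := by
  unfold fz; split_ifs <;> norm_num

lemma cast3 (a b : ℕ) : ((3*a+b : ℕ) : ZMod 3) = (b : ZMod 3) := by
  push_cast
  rw [show ((3:ZMod 3)) = 0 from rfl]
  ring

lemma nat0 : ∀ n : ℕ, ∑ j ∈ Finset.range (3*n), bz ((j : ℕ) : ZMod 3) = 0 := by
  intro n
  induction n with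
  | zero => simp
  | succ n ih =>
    rw [show 3*(n+1) = (3*n)+1+1+1 by ring, Finset.sum_range_succ, Finset.sum_range_succ,
      Finset.sum_range_succ, ih]
    rw [show (3*n+1+1 : ℕ) = 3*n+2 by ring, cast3 n 2, show ((3*n : ℕ)) = 3*n+0 by ring,
      cast3 n 0, show (3*n+0+1 : ℕ) = 3*n+1 by ring, cast3 n 1]
    decide

lemma nat1 (r : ZMod 3) : ∀ n, 1 ≤ n → ∑ j ∈ Finset.range (3*n+1), fz r (j+1) = -(bz r) := by
  intro n hn
  induction n, hn using Nat.le_induction with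
  | base =>
    rw [show 3*1+1 = 4 by norm_num, Finset.sum_range_succ, Finset.sum_range_succ,
      Finset.sum_range_succ, Finset.sum_range_succ, Finset.sum_range_zero]
    revert r; decide
  | succ n hn ih =>
    rw [show 3*(n+1)+1 = (3*n+1)+1+1+1 by ring, Finset.sum_range_succ, Finset.sum_range_succ,
      Finset.sum_range_succ, ih]
    have e1 : fz r (3*n+1+1) = (if r = 2 then -3 else -2) := by
      unfold fz; rw [if_neg (by omega), if_neg (by omega), if_neg (by omega)]
    have e2 : fz r (3*n+1+1+1) = 1 := by
      unfold fz; rw [if_neg (by omega), if_pos (by omega)]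
    have e3 : fz r (3*n+1+1+1+1) = (if r = 2 then 2 else 1) := by
      unfold fz; rw [if_neg (by omega), if_neg (by omega), if_pos (by omega)]
    rw [e1, e2, e3]
    clear ih hn e1 e2 e3
    revert r; decide

lemma nat2 (r : ZMod 3) : ∀ n, 1 ≤ n →
    ∑ j ∈ Finset.range (3*n+1),
      (fz (r - ((j+1 : ℕ) : ZMod 3)) (j+1) + fz (r + ((j+1 : ℕ) : ZMod 3)) (j+1)) = -(bz r) := by
  intro n hn
  induction n, hn using Nat.le_induction with
  | base =>
    rw [show 3*1+1 = 4 by norm_num, Finset.sum_range_succ, Finset.sum_range_succ,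
      Finset.sum_range_succ, Finset.sum_range_succ, Finset.sum_range_zero]
    revert r; decide
  | succ n hn ih =>
    rw [show 3*(n+1)+1 = (3*n+1)+1+1+1 by ring, Finset.sum_range_succ, Finset.sum_range_succ,
      Finset.sum_range_succ, ih]
    have c1 : ((3*n+1+1 : ℕ) : ZMod 3) = 2 := by
      rw [show (3*n+1+1 : ℕ) = 3*n+2 by ring, cast3]; norm_num
    have c2 : ((3*n+1+1+1 : ℕ) : ZMod 3) = 0 := by
      rw [show (3*n+1+1+1 : ℕ) = 3*(n+1)+0 by ring, cast3]; norm_num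
    have c3 : ((3*n+1+1+1+1 : ℕ) : ZMod 3) = 1 := by
      rw [show (3*n+1+1+1+1 : ℕ) = 3*(n+1)+1 by ring, cast3]; norm_num
    have e1 : ∀ s : ZMod 3, fz s (3*n+1+1) = (if s = 2 then -3 else -2) := by
      intro s; unfold fz; rw [if_neg (by omega), if_neg (by omega), if_neg (by omega)]
    have e2 : ∀ s : ZMod 3, fz s (3*n+1+1+1) = 1 := by
      intro s; unfold fz; rw [if_neg (by omega), if_pos (by omega)]
    have e3 : ∀ s : ZMod 3, fz s (3*n+1+1+1+1) = (if s = 2 then 2 else 1) := by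
      intro s; unfold fz; rw [if_neg (by omega), if_neg (by omega), if_pos (by omega)]
    rw [c1, c2, c3, e1, e1, e2, e2, e3, e3]
    clear ih hn c1 c2 c3 e1 e2 e3
    revert r; decide


variable (k : ℕ)

def r3 : ZMod (6*k+3) →+* ZMod 3 :=
  ZMod.castHom (show (3:ℕ) ∣ 6*k+3 from ⟨2*k+1, by ring⟩) (ZMod 3)

def rad (δ : ZMod (6*k+3)) : ℕ := min δ.val (6*k+3 - δ.val)

def W (x y : ZMod (6*k+3)) : ℤ :=
  fz (r3 k ((x+y)*((3*k+2 : ℕ) : ZMod (6*k+3)))) (rad k ((x-y)*((3*k+2 : ℕ) : ZMod (6*k+3))))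

def B (x : ZMod (6*k+3)) : ℤ := bz (r3 k x)

lemma rad_neg (δ : ZMod (6*k+3)) : rad k (-δ) = rad k δ := by
  unfold rad
  by_cases h : δ = 0
  · simp [h]
  · rw [ZMod.neg_val, if_neg h]
    have := δ.val_lt
    omega

lemma rad_cast (j : ℕ) (h : j + 1 ≤ 3*k+1) : rad k ((j+1 : ℕ) : ZMod (6*k+3)) = j + 1 := by
  unfold rad
  rw [ZMod.val_natCast_of_lt (by omega)]
  omega

lemma r3_cast (j : ℕ) : r3 k ((j : ℕ) : ZMod (6*k+3)) = ((j : ℕ) : ZMod 3) := map_natCast _ _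

lemma h21 : (2 : ZMod (6*k+3)) * ((3*k+2 : ℕ) : ZMod (6*k+3)) = 1 := by
  have h : ((6*k+3 : ℕ) : ZMod (6*k+3)) = 0 := ZMod.natCast_self _
  push_cast at h ⊢
  linear_combination h

lemma two_mul_inj {a b : ZMod (6*k+3)} (h : 2*a = 2*b) : a = b := by
  rw [mul_comm 2 a, mul_comm 2 b] at h
  have h2 := congrArg (· * ((3*k+2 : ℕ) : ZMod (6*k+3))) h
  simp only [mul_assoc, h21 k, mul_one] at h2
  exact h2
  
lemma W_symm (x y : ZMod (6*k+3)) : W k x y = W k y x := by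
  unfold W
  rw [add_comm y x, show (y-x)*((3*k+2 : ℕ) : ZMod (6*k+3)) =
    -((x-y)*((3*k+2 : ℕ) : ZMod (6*k+3))) by ring, rad_neg]

lemma sum_univ_eq (g : ZMod (6*k+3) → ℤ) :
    ∑ x : ZMod (6*k+3), g x = ∑ j ∈ Finset.range (6*k+3), g ((j : ℕ) : ZMod (6*k+3)) := by
  rw [← Fin.sum_univ_eq_sum_range (fun j => g ((j : ℕ) : ZMod (6*k+3))) (6*k+3)]
  exact Fintype.sum_equiv
    ⟨fun x => ⟨x.val, x.val_lt⟩, fun j => ((j.val : ℕ) : ZMod (6*k+3)),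
      fun x => ZMod.natCast_rightInverse x,
      fun j => Fin.ext (by simp [ZMod.val_natCast_of_lt j.isLt])⟩
    _ _ (fun x => by simp [ZMod.natCast_rightInverse x])

lemma sum_erase_zero (g : ZMod (6*k+3) → ℤ) :
    ∑ δ ∈ Finset.univ.erase (0 : ZMod (6*k+3)), g δ
      = ∑ j ∈ Finset.range (6*k+2), g ((j+1 : ℕ) : ZMod (6*k+3)) := by
  have h1 := Finset.add_sum_erase Finset.univ g (Finset.mem_univ (0 : ZMod (6*k+3)))
  have h2 : ∑ x : ZMod (6*k+3), g x
      = ∑ j ∈ Finset.range (6*k+2), g ((j+1 : ℕ) : ZMod (6*k+3)) + g ((0:ℕ) : ZMod (6*k+3)) := by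
    rw [sum_univ_eq]
    exact Finset.sum_range_succ' (fun j => g ((j : ℕ) : ZMod (6*k+3))) (6*k+2)
  simp only [Nat.cast_zero] at h2
  linarith [h1, h2]


lemma fold (H : ZMod (6*k+3) → ℤ) :
    ∑ δ ∈ Finset.univ.erase (0 : ZMod (6*k+3)), H δ
      = ∑ j ∈ Finset.range (3*k+1),
          (H ((j+1:ℕ) : ZMod (6*k+3)) + H (-((j+1:ℕ) : ZMod (6*k+3)))) := by
  rw [sum_erase_zero]
  have hsplit : ∑ j ∈ Finset.range (6*k+2), H ((j+1:ℕ) : ZMod (6*k+3))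
      = ∑ j ∈ Finset.range (3*k+1), H ((j+1:ℕ) : ZMod (6*k+3))
        + ∑ j ∈ Finset.Ico (3*k+1) (6*k+2), H ((j+1:ℕ) : ZMod (6*k+3)) := by
    rw [Finset.range_eq_Ico, Finset.range_eq_Ico]
    exact (Finset.sum_Ico_consecutive (fun j => H ((j+1:ℕ) : ZMod (6*k+3))) (by omega : 0 ≤ 3*k+1) (by omega : 3*k+1 ≤ 6*k+2)).symm
  rw [hsplit, Finset.sum_Ico_eq_sum_range, show 6*k+2 - (3*k+1) = 3*k+1 by omega,
    Finset.sum_add_distrib]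
  congr 1
  rw [← Finset.sum_range_reflect (fun j => H (-((j+1:ℕ) : ZMod (6*k+3)))) (3*k+1)]
  apply Finset.sum_congr rfl
  intro j hj
  rw [Finset.mem_range] at hj
  congr 1
  have e : (3*k+1-1-j+1 : ℕ) = 3*k+1-j := by omega
  rw [e]
  have hz : ((3*k+1+j+1 : ℕ) : ZMod (6*k+3)) + ((3*k+1-j : ℕ) : ZMod (6*k+3)) = 0 := by
    rw [← Nat.cast_add, show 3*k+1+j+1 + (3*k+1-j) = 6*k+3 by omega, ZMod.natCast_self]
  exact eq_neg_of_add_eq_zero_left hz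

lemma Z_A : ∑ x : ZMod (6*k+3), B k x = 0 := by
  rw [sum_univ_eq]
  have h := nat0 (2*k+1)
  rw [show 3*(2*k+1) = 6*k+3 by ring] at h
  rw [← h]
  exact Finset.sum_congr rfl (fun j _ => by unfold B; rw [r3_cast])

lemma Z_C (hk : 1 ≤ k) (t : ZMod (6*k+3)) :
    2 * B k t + ∑ z ∈ Finset.univ.erase t, W k z (2*t - z) = 0 := by
  have key : ∑ z ∈ Finset.univ.erase t, W k z (2*t - z)
      = ∑ δ ∈ Finset.univ.erase (0 : ZMod (6*k+3)), fz (r3 k t) (rad k δ) := by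
    apply Finset.sum_nbij' (fun z => z - t) (fun δ => t + δ)
    · intro a ha
      simp only [Finset.mem_erase, Finset.mem_univ, and_true] at ha ⊢
      intro h; exact ha (by rwa [sub_eq_zero] at h)
    · intro a ha
      simp only [Finset.mem_erase, Finset.mem_univ, and_true] at ha ⊢
      intro h; exact ha (by linear_combination h)
    · intro a _; ring
    · intro a _; ring
    · intro a _
      unfold W
      congr 2
      · linear_combination t * h21 k
      · linear_combination (a - t) * h21 k
  rw [key, fold]
  have hc : ∀ j ∈ Finset.range (3*k+1),
      fz (r3 k t) (rad k ((j+1:ℕ) : ZMod (6*k+3)))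
        + fz (r3 k t) (rad k (-((j+1:ℕ) : ZMod (6*k+3))))
      = 2 * fz (r3 k t) (j+1) := by
    intro j hj
    rw [Finset.mem_range] at hj
    rw [rad_neg, rad_cast k j (by omega)]; ring
  rw [Finset.sum_congr rfl hc, ← Finset.mul_sum, nat1 (r3 k t) k hk]
  unfold B; ring

lemma Z_B (hk : 1 ≤ k) (x : ZMod (6*k+3)) :
    B k x + ∑ z ∈ Finset.univ.erase x, W k x z = 0 := by
  have key : ∑ z ∈ Finset.univ.erase x, W k x z
      = ∑ δ ∈ Finset.univ.erase (0 : ZMod (6*k+3)), fz (r3 k (x - δ)) (rad k δ) := by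
    apply Finset.sum_nbij' (fun z => (x - z) * ((3*k+2 : ℕ) : ZMod (6*k+3)))
      (fun δ => x - 2*δ)
    · intro a ha
      simp only [Finset.mem_erase, Finset.mem_univ, and_true] at ha ⊢
      intro h
      apply ha
      have h2 : (x - a) * (((3*k+2:ℕ) : ZMod (6*k+3)) * 2) = 0 := by
        rw [← mul_assoc, h, zero_mul]
      rw [mul_comm ((3*k+2:ℕ) : ZMod (6*k+3)) 2, h21 k, mul_one, sub_eq_zero] at h2
      exact h2.symm
    · intro a ha
      simp only [Finset.mem_erase, Finset.mem_univ, and_true] at ha ⊢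
      intro h
      apply ha
      apply two_mul_inj k
      rw [mul_zero]
      linear_combination -h
    · intro a _
      linear_combination (a - x) * h21 k
    · intro a _
      linear_combination a * h21 k
    · intro a _
      unfold W
      congr 2
      linear_combination x * h21 k
  rw [key, fold]
  have hc : ∀ j ∈ Finset.range (3*k+1),
      fz (r3 k (x - ((j+1:ℕ) : ZMod (6*k+3)))) (rad k ((j+1:ℕ) : ZMod (6*k+3)))
        + fz (r3 k (x - -((j+1:ℕ) : ZMod (6*k+3)))) (rad k (-((j+1:ℕ) : ZMod (6*k+3))))
      = fz (r3 k x - ((j+1:ℕ) : ZMod 3)) (j+1) + fz (r3 k x + ((j+1:ℕ) : ZMod 3)) (j+1) := by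
    intro j hj
    rw [Finset.mem_range] at hj
    rw [rad_neg, rad_cast k j (by omega), sub_neg_eq_add, map_sub, map_add, r3_cast]
  rw [Finset.sum_congr rfl hc, nat2 (r3 k x) k hk]
  unfold B; ring


def fl (a : ZMod (6*k+3)) : Fin (6*k+4) := ⟨a.val, by have := a.val_lt; omega⟩

def pi (v : Fin (6*k+4)) : ZMod (6*k+3) := ((v.val : ℕ) : ZMod (6*k+3))

def lst : Fin (6*k+4) := ⟨6*k+3, by omega⟩

def zf (a : ZMod (6*k+3)) : Fin (6*k+3) := ⟨a.val, a.val_lt⟩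

def C (x y : Fin (6*k+4)) : Fin (6*k+3) :=
  if x.val = 6*k+3 then zf k (pi k y)
  else if y.val = 6*k+3 then zf k (pi k x)
  else zf k ((pi k x + pi k y) * ((3*k+2:ℕ) : ZMod (6*k+3)))

def Wf (x y : Fin (6*k+4)) : ℤ :=
  if x.val = 6*k+3 then B k (pi k y)
  else if y.val = 6*k+3 then B k (pi k x)
  else W k (pi k x) (pi k y)

def P (t : Fin (6*k+3)) (x : Fin (6*k+4)) : Fin (6*k+4) :=
  if x.val = 6*k+3 then fl k ((t.val : ℕ) : ZMod (6*k+3))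
  else if x.val = t.val then lst k
  else fl k (2*((t.val : ℕ) : ZMod (6*k+3)) - pi k x)

lemma fl_val (a : ZMod (6*k+3)) : (fl k a).val = a.val := rfl

lemma fl_val_ne (a : ZMod (6*k+3)) : (fl k a).val ≠ 6*k+3 := by
  rw [fl_val]; have := a.val_lt; omega

lemma pi_fl (a : ZMod (6*k+3)) : pi k (fl k a) = a := ZMod.natCast_rightInverse a

lemma fl_pi {v : Fin (6*k+4)} (hv : v.val ≠ 6*k+3) : fl k (pi k v) = v := by
  apply Fin.ext
  rw [fl_val]
  exact ZMod.val_natCast_of_lt (by have := v.isLt; omega)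

lemma pi_inj {u v : Fin (6*k+4)} (hu : u.val ≠ 6*k+3) (hv : v.val ≠ 6*k+3)
    (h : pi k u = pi k v) : u = v := by
  rw [← fl_pi k hu, ← fl_pi k hv, h]

lemma zf_eq_iff {a : ZMod (6*k+3)} {t : Fin (6*k+3)} :
    zf k a = t ↔ a = ((t.val : ℕ) : ZMod (6*k+3)) := by
  constructor
  · intro h
    have hv : a.val = t.val := congrArg Fin.val h
    rw [← hv]
    exact (ZMod.natCast_rightInverse a).symm
  · intro h
    subst h
    exact Fin.ext (ZMod.val_natCast_of_lt t.isLt)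

lemma tcast_val (t : Fin (6*k+3)) : ((t.val : ℕ) : ZMod (6*k+3)).val = t.val :=
  ZMod.val_natCast_of_lt t.isLt

lemma pi_eq_tcast {x : Fin (6*k+4)} (hx : x.val ≠ 6*k+3) {t : Fin (6*k+3)} :
    pi k x = ((t.val : ℕ) : ZMod (6*k+3)) ↔ x.val = t.val := by
  constructor
  · intro h
    have := congrArg ZMod.val h
    rwa [show (pi k x).val = x.val from ZMod.val_natCast_of_lt (by have := x.isLt; omega),
      tcast_val] at this
  · intro h; unfold pi; rw [h]

lemma C_symm (x y : Fin (6*k+4)) : C k x y = C k y x := by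
  unfold C
  by_cases hx : x.val = 6*k+3 <;> by_cases hy : y.val = 6*k+3
  · have : x = y := Fin.ext (by rw [hx, hy])
    rw [this]
  · rw [if_pos hx, if_neg hy, if_pos hx]
  · rw [if_neg hx, if_pos hy, if_pos hy]
  · rw [if_neg hx, if_neg hy, if_neg hy, if_neg hx, add_comm (pi k x) (pi k y)]

lemma Wf_symm (x y : Fin (6*k+4)) : Wf k x y = Wf k y x := by
  unfold Wf
  by_cases hx : x.val = 6*k+3 <;> by_cases hy : y.val = 6*k+3
  · have : x = y := Fin.ext (by rw [hx, hy])
    rw [this]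
  · rw [if_pos hx, if_neg hy, if_pos hx]
  · rw [if_neg hx, if_pos hy, if_pos hy]
  · rw [if_neg hx, if_neg hy, if_neg hy, if_neg hx, W_symm]

lemma partner (t : Fin (6*k+3)) (x : Fin (6*k+4)) :
    (P k t x ≠ x ∧ C k x (P k t x) = t) ∧ ∀ y, y ≠ x → C k x y = t → y = P k t x := by
  by_cases hx : x.val = 6*k+3
  · have hP : P k t x = fl k ((t.val : ℕ) : ZMod (6*k+3)) := by unfold P; rw [if_pos hx]
    refine ⟨⟨?_, ?_⟩, ?_⟩
    · intro h
      have := congrArg Fin.val h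
      rw [hP] at h
      have := congrArg Fin.val h
      rw [fl_val, tcast_val, hx] at this
      have := t.isLt; omega
    · rw [hP]
      unfold C
      rw [if_pos hx, pi_fl, zf_eq_iff]
    · intro y hy hC
      have hyv : y.val ≠ 6*k+3 := fun h => hy (Fin.ext (by rw [h, hx]))
      have : zf k (pi k y) = t := by rw [← hC]; unfold C; rw [if_pos hx]
      rw [zf_eq_iff] at this
      rw [hP, ← this, fl_pi k hyv]
  · by_cases hxt : x.val = t.val
    · have hP : P k t x = lst k := by unfold P; rw [if_neg hx, if_pos hxt]
      have hpix : pi k x = ((t.val : ℕ) : ZMod (6*k+3)) := (pi_eq_tcast k hx).2 hxt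
      refine ⟨⟨?_, ?_⟩, ?_⟩
      · intro h
        have := congrArg Fin.val h
        rw [hP] at h
        exact hx (congrArg Fin.val h.symm ▸ rfl)
      · rw [hP]
        unfold C
        rw [if_neg hx, if_pos (show (lst k).val = 6*k+3 from rfl), zf_eq_iff, hpix]
      · intro y hy hC
        rw [hP]
        by_cases hyv : y.val = 6*k+3
        · exact Fin.ext hyv
        · exfalso
          have : zf k ((pi k x + pi k y) * ((3*k+2:ℕ) : ZMod (6*k+3))) = t := by
            rw [← hC]; unfold C; rw [if_neg hx, if_neg hyv]
          rw [zf_eq_iff, ← hpix] at this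
          have h2 : 2 * ((pi k x + pi k y) * ((3*k+2:ℕ) : ZMod (6*k+3))) = 2 * pi k x := by
            rw [this]
          have h3 : pi k x + pi k y = 2 * pi k x := by
            calc pi k x + pi k y = (pi k x + pi k y) * (2 * ((3*k+2:ℕ) : ZMod (6*k+3))) := by
                  rw [h21 k, mul_one]
            _ = 2 * ((pi k x + pi k y) * ((3*k+2:ℕ) : ZMod (6*k+3))) := by ring
            _ = 2 * pi k x := h2
          have : pi k y = pi k x := by linear_combination h3
          exact hy (pi_inj k hyv hx this)
    · have hpix : pi k x ≠ ((t.val : ℕ) : ZMod (6*k+3)) := fun h => hxt ((pi_eq_tcast k hx).1 h)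
      have hP : P k t x = fl k (2*((t.val : ℕ) : ZMod (6*k+3)) - pi k x) := by
        unfold P; rw [if_neg hx, if_neg hxt]
      refine ⟨⟨?_, ?_⟩, ?_⟩
      · intro h
        rw [hP] at h
        have := congrArg (pi k) h
        rw [pi_fl] at this
        have h2 : 2 * pi k x = 2 * ((t.val : ℕ) : ZMod (6*k+3)) := by linear_combination -this
        exact hpix (two_mul_inj k h2)
      · rw [hP]
        unfold C
        rw [if_neg hx, if_neg (fl_val_ne k _), pi_fl, zf_eq_iff]
        linear_combination ((t.val : ℕ) : ZMod (6*k+3)) * h21 k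
      · intro y hy hC
        by_cases hyv : y.val = 6*k+3
        · exfalso
          have : zf k (pi k x) = t := by
            rw [← hC]; unfold C; rw [if_neg hx, if_pos hyv]
          rw [zf_eq_iff] at this
          exact hpix this
        · have : zf k ((pi k x + pi k y) * ((3*k+2:ℕ) : ZMod (6*k+3))) = t := by
            rw [← hC]; unfold C; rw [if_neg hx, if_neg hyv]
          rw [zf_eq_iff] at this
          have h3 : pi k y = 2*((t.val : ℕ) : ZMod (6*k+3)) - pi k x := by
            have h4 : (pi k x + pi k y) * (2 * ((3*k+2:ℕ) : ZMod (6*k+3)))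
                = 2 * ((t.val : ℕ) : ZMod (6*k+3)) := by
              rw [show (pi k x + pi k y) * (2 * ((3*k+2:ℕ) : ZMod (6*k+3)))
                = 2 * ((pi k x + pi k y) * ((3*k+2:ℕ) : ZMod (6*k+3))) by ring, this]
            rw [h21 k, mul_one] at h4
            linear_combination h4
          rw [hP, ← h3, fl_pi k hyv]

lemma sum_erase_last (F : Fin (6*k+4) → ℤ) :
    ∑ y ∈ Finset.univ.erase (lst k), F y = ∑ z : ZMod (6*k+3), F (fl k z) := by
  symm
  apply Finset.sum_nbij' (fun z => fl k z) (fun y => pi k y)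
  · intro a _
    simp only [Finset.mem_erase, Finset.mem_univ, and_true]
    intro h
    exact fl_val_ne k a (by rw [congrArg Fin.val h]; rfl)
  · intro a _; exact Finset.mem_univ _
  · intro a _; exact pi_fl k a
  · intro a ha
    simp only [Finset.mem_erase, Finset.mem_univ, and_true] at ha
    exact fl_pi k (fun h => ha (Fin.ext (by rw [h]; rfl)))
  · intro a _; rfl

lemma sum_erase_fin (x : Fin (6*k+4)) (hx : x.val ≠ 6*k+3) (F : Fin (6*k+4) → ℤ) :
    ∑ y ∈ Finset.univ.erase x, F y
      = F (lst k) + ∑ z ∈ Finset.univ.erase (pi k x), F (fl k z) := by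
  rw [← Finset.add_sum_erase _ F (show lst k ∈ Finset.univ.erase x by
    simp only [Finset.mem_erase, Finset.mem_univ, and_true]
    exact fun h => hx (by rw [← congrArg Fin.val h]; rfl))]
  congr 1
  symm
  apply Finset.sum_nbij' (fun z => fl k z) (fun y => pi k y)
  · intro a ha
    simp only [Finset.mem_erase, Finset.mem_univ, and_true] at ha ⊢
    constructor
    · intro h
      exact fl_val_ne k a (by rw [congrArg Fin.val h]; rfl)
    · intro h
      apply ha
      rw [← pi_fl k a, h]
  · intro a ha
    simp only [Finset.mem_erase, Finset.mem_univ, and_true] at ha ⊢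
    intro h
    exact ha.2 (pi_inj k (fun hh => ha.1 (Fin.ext (by rw [hh]; rfl))) hx h)
  · intro a _; exact pi_fl k a
  · intro a ha
    simp only [Finset.mem_erase, Finset.mem_univ, and_true] at ha
    exact fl_pi k (fun h => ha.1 (Fin.ext (by rw [h]; rfl)))
  · intro a _; rfl

end Stmt14

/-- For every k > 1, K_{6k+4} admits a 4-null 1-factorisation.
`c x y` is the index of the 1-factor containing edge {x,y} and
`w x y ∈ {±1,±2,±3}` its weight; each 1-factor is a perfect matching, vertex
sums vanish and each 1-factor has weight zero. -/
theorem stmt14 (k : ℕ) (hk : 1 < k) :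
    ∃ (c : Fin (6*k+4) → Fin (6*k+4) → Fin (6*k+3))
      (w : Fin (6*k+4) → Fin (6*k+4) → ℤ),
      (∀ x y, c x y = c y x) ∧
      (∀ x y, w x y = w y x) ∧
      (∀ (t : Fin (6*k+3)) (x : Fin (6*k+4)), ∃! y, y ≠ x ∧ c x y = t) ∧
      (∀ x y : Fin (6*k+4), x ≠ y → (w x y ≠ 0 ∧ |w x y| ≤ 3)) ∧
      (∀ x : Fin (6*k+4), ∑ y ∈ Finset.univ.erase x, w x y = 0) ∧
      (∀ t : Fin (6*k+3),
        ∑ x, ∑ y ∈ Finset.univ.erase x, (if c x y = t then w x y else 0) = 0) := by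
  have hk1 : 1 ≤ k := le_of_lt hk
  refine ⟨Stmt14.C k, Stmt14.Wf k, Stmt14.C_symm k, Stmt14.Wf_symm k, ?_, ?_, ?_, ?_⟩
  · -- existence and uniqueness of partners
    intro t x
    obtain ⟨⟨h1, h2⟩, h3⟩ := Stmt14.partner k t x
    exact ⟨Stmt14.P k t x, ⟨h1, h2⟩, fun y hy => h3 y hy.1 hy.2⟩
  · -- weights nonzero and bounded
    intro x y _
    unfold Stmt14.Wf
    split_ifs
    · exact Stmt14.bz_props _
    · exact Stmt14.bz_props _
    · exact Stmt14.fz_props _ _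
  · -- vertex sums
    intro x
    by_cases hx : x.val = 6*k+3
    · have hxl : x = Stmt14.lst k := Fin.ext (by rw [hx]; rfl)
      subst hxl
      rw [Stmt14.sum_erase_last]
      have hc : ∀ z ∈ (Finset.univ : Finset (ZMod (6*k+3))),
          Stmt14.Wf k (Stmt14.lst k) (Stmt14.fl k z) = Stmt14.B k z := by
        intro z _
        unfold Stmt14.Wf
        rw [if_pos (show (Stmt14.lst k).val = 6*k+3 from rfl), Stmt14.pi_fl]
      rw [Finset.sum_congr rfl hc]
      exact Stmt14.Z_A k
    · rw [Stmt14.sum_erase_fin k x hx]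
      have h1 : Stmt14.Wf k x (Stmt14.lst k) = Stmt14.B k (Stmt14.pi k x) := by
        unfold Stmt14.Wf
        rw [if_neg hx, if_pos (show (Stmt14.lst k).val = 6*k+3 from rfl)]
      have h2 : ∀ z ∈ Finset.univ.erase (Stmt14.pi k x),
          Stmt14.Wf k x (Stmt14.fl k z) = Stmt14.W k (Stmt14.pi k x) z := by
        intro z _
        unfold Stmt14.Wf
        rw [if_neg hx, if_neg (Stmt14.fl_val_ne k z), Stmt14.pi_fl]
      rw [h1, Finset.sum_congr rfl h2]
      exact Stmt14.Z_B k hk1 (Stmt14.pi k x)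
  · -- factor sums
    intro t
    have inner : ∀ x : Fin (6*k+4),
        ∑ y ∈ Finset.univ.erase x, (if Stmt14.C k x y = t then Stmt14.Wf k x y else 0)
          = Stmt14.Wf k x (Stmt14.P k t x) := by
      intro x
      obtain ⟨⟨h1, h2⟩, h3⟩ := Stmt14.partner k t x
      rw [Finset.sum_eq_single_of_mem (Stmt14.P k t x)
        (Finset.mem_erase.2 ⟨h1, Finset.mem_univ _⟩)
        (fun y hy hne => if_neg (fun hC => hne (h3 y (Finset.mem_erase.1 hy).1 hC)))]
      exact if_pos h2
    rw [Finset.sum_congr rfl (fun x _ => inner x)]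
    rw [← Finset.add_sum_erase _ _ (Finset.mem_univ (Stmt14.lst k)), Stmt14.sum_erase_last]
    have hPl : Stmt14.P k t (Stmt14.lst k) = Stmt14.fl k ((t.val : ℕ) : ZMod (6*k+3)) := by
      unfold Stmt14.P
      rw [if_pos (show (Stmt14.lst k).val = 6*k+3 from rfl)]
    have e1 : Stmt14.Wf k (Stmt14.lst k) (Stmt14.P k t (Stmt14.lst k))
        = Stmt14.B k ((t.val : ℕ) : ZMod (6*k+3)) := by
      rw [hPl]
      unfold Stmt14.Wf
      rw [if_pos (show (Stmt14.lst k).val = 6*k+3 from rfl), Stmt14.pi_fl]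
    rw [e1, ← Finset.add_sum_erase _ _ (Finset.mem_univ (((t.val : ℕ) : ZMod (6*k+3))))]
    have e2 : Stmt14.Wf k (Stmt14.fl k ((t.val : ℕ) : ZMod (6*k+3)))
        (Stmt14.P k t (Stmt14.fl k ((t.val : ℕ) : ZMod (6*k+3))))
        = Stmt14.B k ((t.val : ℕ) : ZMod (6*k+3)) := by
      have hv : (Stmt14.fl k ((t.val : ℕ) : ZMod (6*k+3))).val = t.val := Stmt14.tcast_val k t
      have hv3 : (Stmt14.fl k ((t.val : ℕ) : ZMod (6*k+3))).val ≠ 6*k+3 :=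
        Stmt14.fl_val_ne k _
      have hP2 : Stmt14.P k t (Stmt14.fl k ((t.val : ℕ) : ZMod (6*k+3))) = Stmt14.lst k := by
        unfold Stmt14.P
        rw [if_neg hv3, if_pos hv]
      rw [hP2]
      unfold Stmt14.Wf
      rw [if_neg hv3, if_pos (show (Stmt14.lst k).val = 6*k+3 from rfl), Stmt14.pi_fl]
    have e3 : ∀ z ∈ Finset.univ.erase (((t.val : ℕ) : ZMod (6*k+3))),
        Stmt14.Wf k (Stmt14.fl k z) (Stmt14.P k t (Stmt14.fl k z))
          = Stmt14.W k z (2*((t.val : ℕ) : ZMod (6*k+3)) - z) := by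
      intro z hz
      have hzt : z ≠ ((t.val : ℕ) : ZMod (6*k+3)) := (Finset.mem_erase.1 hz).1
      have hz3 : (Stmt14.fl k z).val ≠ 6*k+3 := Stmt14.fl_val_ne k z
      have hztv : (Stmt14.fl k z).val ≠ t.val := by
        intro h
        apply hzt
        rw [← Stmt14.pi_fl k z]
        exact (Stmt14.pi_eq_tcast k hz3).2 h
      have hP3 : Stmt14.P k t (Stmt14.fl k z)
          = Stmt14.fl k (2*((t.val : ℕ) : ZMod (6*k+3)) - z) := by
        unfold Stmt14.P
        rw [if_neg hz3, if_neg hztv, Stmt14.pi_fl]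
      rw [hP3]
      unfold Stmt14.Wf
      rw [if_neg hz3, if_neg (Stmt14.fl_val_ne k _), Stmt14.pi_fl, Stmt14.pi_fl]
    rw [e2, Finset.sum_congr rfl e3]
    have hZ := Stmt14.Z_C k hk1 (((t.val : ℕ) : ZMod (6*k+3)))
    unfold Stmt14.B at hZ ⊢
    linarith
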